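/- (Lemma 2, Q*(λ) convergence.) Let γ ∈ (0,1) and 0 ≤ λ < (1−γ)/(2γ). Then (γ + λγ)/(1 − λγ) < 1, and for any behavior policy μ and Q-function Q, the iterates Q_k = (R*_λ)^k Q satisfy ‖Q_k − Q*‖ ≤ [(γ+λγ)/(1−λγ)]^k ‖Q − Q*‖; in particular Q_k converges to Q* exponentially fast in sup norm. -/
import Mathlib


open scoped BigOperators

noncomputable section

/-- The operator `P^μ` on Q-functions. -/
def Pop {X A : Type*} [Fintype X] [Fintype A] (P : X → A → X → ℝ) (μ : X → A → ℝ)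
    (Q : X × A → ℝ) : X × A → ℝ :=
  fun p => ∑ y : X, ∑ b : A, P p.1 p.2 y * μ y b * Q (y, b)

/-- The Bellman optimality operator
`(T Q)(x,a) = r(x,a) + γ ∑_{x'} P(x'|x,a) max_{a'} Q(x',a')`. -/
def Topt {X A : Type*} [Fintype X] [Fintype A] [Nonempty A]
    (P : X → A → X → ℝ) (γ : ℝ) (r : X × A → ℝ) (Q : X × A → ℝ) : X × A → ℝ :=
  fun p => r p + γ * ∑ y : X, P p.1 p.2 y * (⨆ b : A, Q (y, b))

/-- The control operator `R*_λ Q = Q + ∑_{t≥0} (λγ)^t (P^μ)^t (T Q − Q)`. -/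
def Rstar {X A : Type*} [Fintype X] [Fintype A] [Nonempty A]
    (P : X → A → X → ℝ) (μ : X → A → ℝ) (γ lam : ℝ) (r : X × A → ℝ)
    (Q : X × A → ℝ) : X × A → ℝ :=
  Q + ∑' t : ℕ, (lam * γ) ^ t • (Pop P μ)^[t] (Topt P γ r Q - Q)

open Filter Topology

lemma pop_norm_le {X A : Type*} [Fintype X] [Fintype A] [Nonempty X] [Nonempty A]
    (P : X → A → X → ℝ)
    (hP0 : ∀ x a y, 0 ≤ P x a y) (hP1 : ∀ x a, ∑ y : X, P x a y = 1)
    (μ : X → A → ℝ)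
    (hμ0 : ∀ x a, 0 ≤ μ x a) (hμ1 : ∀ x, ∑ a : A, μ x a = 1)
    (Q : X × A → ℝ) : ‖Pop P μ Q‖ ≤ ‖Q‖ := by
  rw [pi_norm_le_iff_of_nonneg (norm_nonneg Q)]
  intro p
  have key : |∑ y : X, ∑ b : A, P p.1 p.2 y * μ y b * Q (y, b)| ≤ ‖Q‖ := by
    calc |∑ y : X, ∑ b : A, P p.1 p.2 y * μ y b * Q (y, b)|
        ≤ ∑ y : X, ∑ b : A, |P p.1 p.2 y * μ y b * Q (y, b)| := by
          refine (Finset.abs_sum_le_sum_abs _ _).trans ?_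
          exact Finset.sum_le_sum fun y _ => Finset.abs_sum_le_sum_abs _ _
      _ ≤ ∑ y : X, ∑ b : A, P p.1 p.2 y * μ y b * ‖Q‖ := by
          refine Finset.sum_le_sum fun y _ => Finset.sum_le_sum fun b _ => ?_
          rw [abs_mul, abs_of_nonneg (mul_nonneg (hP0 _ _ _) (hμ0 _ _))]
          exact mul_le_mul_of_nonneg_left (norm_le_pi_norm Q (y, b))
            (mul_nonneg (hP0 _ _ _) (hμ0 _ _))
      _ = ‖Q‖ := by
          simp_rw [← Finset.sum_mul, ← Finset.mul_sum]
          simp [hμ1, hP1]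
  simpa [Pop, Real.norm_eq_abs] using key

lemma topt_contract {X A : Type*} [Fintype X] [Fintype A] [Nonempty X] [Nonempty A]
    (P : X → A → X → ℝ)
    (hP0 : ∀ x a y, 0 ≤ P x a y) (hP1 : ∀ x a, ∑ y : X, P x a y = 1)
    (γ : ℝ) (hγ0 : 0 ≤ γ) (r : X × A → ℝ) (Q1 Q2 : X × A → ℝ) :
    ‖Topt P γ r Q1 - Topt P γ r Q2‖ ≤ γ * ‖Q1 - Q2‖ := by
  have hsup : ∀ y : X, |(⨆ b : A, Q1 (y, b)) - ⨆ b : A, Q2 (y, b)| ≤ ‖Q1 - Q2‖ := by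
    intro y
    have bdd1 : BddAbove (Set.range fun b : A => Q1 (y, b)) := (Set.finite_range _).bddAbove
    have bdd2 : BddAbove (Set.range fun b : A => Q2 (y, b)) := (Set.finite_range _).bddAbove
    rw [abs_sub_le_iff]
    have habs : ∀ b : A, |Q1 (y, b) - Q2 (y, b)| ≤ ‖Q1 - Q2‖ := fun b => by
      have := norm_le_pi_norm (Q1 - Q2) (y, b)
      simpa [Real.norm_eq_abs] using this
    constructor
    · rw [sub_le_iff_le_add]
      refine ciSup_le fun b => ?_
      have h1 := (abs_le.mp (habs b)).2
      have h2 : Q2 (y, b) ≤ ⨆ b : A, Q2 (y, b) := le_ciSup bdd2 b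
      linarith
    · rw [sub_le_iff_le_add]
      refine ciSup_le fun b => ?_
      have h1 := (abs_le.mp (habs b)).1
      have h2 : Q1 (y, b) ≤ ⨆ b : A, Q1 (y, b) := le_ciSup bdd1 b
      linarith
  rw [pi_norm_le_iff_of_nonneg (mul_nonneg hγ0 (norm_nonneg _))]
  intro p
  have : |γ * ∑ y : X, P p.1 p.2 y * ((⨆ b : A, Q1 (y, b)) - ⨆ b : A, Q2 (y, b))|
      ≤ γ * ‖Q1 - Q2‖ := by
    rw [abs_mul, abs_of_nonneg hγ0]
    refine mul_le_mul_of_nonneg_left ?_ hγ0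
    calc |∑ y : X, P p.1 p.2 y * ((⨆ b : A, Q1 (y, b)) - ⨆ b : A, Q2 (y, b))|
        ≤ ∑ y : X, |P p.1 p.2 y * ((⨆ b : A, Q1 (y, b)) - ⨆ b : A, Q2 (y, b))| :=
          Finset.abs_sum_le_sum_abs _ _
      _ ≤ ∑ y : X, P p.1 p.2 y * ‖Q1 - Q2‖ := by
          refine Finset.sum_le_sum fun y _ => ?_
          rw [abs_mul, abs_of_nonneg (hP0 _ _ _)]
          exact mul_le_mul_of_nonneg_left (hsup y) (hP0 _ _ _)
      _ = ‖Q1 - Q2‖ := by rw [← Finset.sum_mul, hP1, one_mul]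
  have heq : (Topt P γ r Q1 - Topt P γ r Q2) p
      = γ * ∑ y : X, P p.1 p.2 y * ((⨆ b : A, Q1 (y, b)) - ⨆ b : A, Q2 (y, b)) := by
    simp only [Pi.sub_apply, Topt, mul_sub, Finset.sum_sub_distrib]
    ring
  rw [heq, Real.norm_eq_abs]
  exact this

lemma pop_iter_norm_le {X A : Type*} [Fintype X] [Fintype A] [Nonempty X] [Nonempty A]
    (P : X → A → X → ℝ)
    (hP0 : ∀ x a y, 0 ≤ P x a y) (hP1 : ∀ x a, ∑ y : X, P x a y = 1)
    (μ : X → A → ℝ)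
    (hμ0 : ∀ x a, 0 ≤ μ x a) (hμ1 : ∀ x, ∑ a : A, μ x a = 1)
    (Q : X × A → ℝ) (t : ℕ) : ‖(Pop P μ)^[t] Q‖ ≤ ‖Q‖ := by
  induction t with
  | zero => simp
  | succ n ih =>
      rw [Function.iterate_succ_apply']
      exact (pop_norm_le P hP0 hP1 μ hμ0 hμ1 _).trans ih


lemma tail_bound {E : Type*} [NormedAddCommGroup E] [CompleteSpace E]
    (a : ℕ → E) (c C : ℝ) (hc0 : 0 ≤ c) (hc1 : c < 1) (hC : 0 ≤ C)
    (hnorm : ∀ t, ‖a t‖ ≤ c ^ t * C) :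
    Summable a ∧ ‖∑' t, a (t + 1)‖ ≤ c / (1 - c) * C := by
  have hgeo : Summable (fun t : ℕ => c ^ t * C) :=
    (summable_geometric_of_lt_one hc0 hc1).mul_right _
  have hsum : Summable a :=
    Summable.of_norm (Summable.of_nonneg_of_le (fun t => norm_nonneg _) hnorm hgeo)
  refine ⟨hsum, ?_⟩
  have htail_norm_sum : Summable (fun t : ℕ => ‖a (t + 1)‖) :=
    Summable.of_nonneg_of_le (fun t => norm_nonneg _) (fun t => hnorm (t + 1))
      ((summable_nat_add_iff 1).mpr hgeo)
  have h1 : ‖∑' t : ℕ, a (t + 1)‖ ≤ ∑' t : ℕ, ‖a (t + 1)‖ :=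
    norm_tsum_le_tsum_norm htail_norm_sum
  have h2 : (∑' t : ℕ, ‖a (t + 1)‖) ≤ ∑' t : ℕ, c ^ (t + 1) * C :=
    Summable.tsum_le_tsum (fun t => hnorm (t + 1)) htail_norm_sum
      ((summable_nat_add_iff 1).mpr hgeo)
  have h3 : (∑' t : ℕ, c ^ (t + 1) * C) = c / (1 - c) * C := by
    have he : ∀ t : ℕ, c ^ (t + 1) * C = c * (c ^ t * C) := fun t => by ring
    simp_rw [he]
    rw [tsum_mul_left, tsum_mul_right, tsum_geometric_of_lt_one hc0 hc1]
    field_simp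
  linarith

set_option maxHeartbeats 1000000 in
lemma rstar_contract {X A : Type*} [Fintype X] [Fintype A] [Nonempty X] [Nonempty A]
    (P : X → A → X → ℝ)
    (hP0 : ∀ x a y, 0 ≤ P x a y) (hP1 : ∀ x a, ∑ y : X, P x a y = 1)
    (μ : X → A → ℝ)
    (hμ0 : ∀ x a, 0 ≤ μ x a) (hμ1 : ∀ x, ∑ a : A, μ x a = 1)
    (γ : ℝ) (hγ0 : 0 < γ) (hγ1 : γ < 1)
    (lam : ℝ) (hl0 : 0 ≤ lam)
    (hc1 : lam * γ < 1)
    (r : X × A → ℝ) (Qstar : X × A → ℝ)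
    (hQstar : Topt P γ r Qstar = Qstar)
    (Q : X × A → ℝ) :
    ‖Rstar P μ γ lam r Q - Qstar‖ ≤ ((γ + lam * γ) / (1 - lam * γ)) * ‖Q - Qstar‖ := by
  set c := lam * γ with hc
  have hc0 : 0 ≤ c := mul_nonneg hl0 hγ0.le
  set D := Topt P γ r Q - Q with hD
  set a : ℕ → X × A → ℝ := fun t => c ^ t • (Pop P μ)^[t] D with ha
  have hnorm : ∀ t, ‖a t‖ ≤ c ^ t * ‖D‖ := by
    intro t
    rw [ha]
    simp only [norm_smul, Real.norm_eq_abs, abs_of_nonneg (pow_nonneg hc0 t)]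
    exact mul_le_mul_of_nonneg_left (pop_iter_norm_le P hP0 hP1 μ hμ0 hμ1 D t)
      (pow_nonneg hc0 t)
  obtain ⟨hsum, htail⟩ := tail_bound a c ‖D‖ hc0 hc1 (norm_nonneg D) hnorm
  have hsplit : Rstar P μ γ lam r Q - Qstar
      = (Topt P γ r Q - Qstar) + ∑' t : ℕ, a (t + 1) := by
    have h0 : (∑' t : ℕ, a t) = a 0 + ∑' t : ℕ, a (t + 1) := Summable.tsum_eq_zero_add hsum
    have ha0 : a 0 = D := by simp [ha]
    have hr : Rstar P μ γ lam r Q = Q + (∑' t : ℕ, a t) := rfl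
    rw [hr, h0, ha0, hD]
    abel
  have hT : ‖Topt P γ r Q - Qstar‖ ≤ γ * ‖Q - Qstar‖ := by
    conv_lhs => rw [← hQstar]
    exact topt_contract P hP0 hP1 γ hγ0.le r Q Qstar
  have hDle : ‖D‖ ≤ (1 + γ) * ‖Q - Qstar‖ := by
    have : D = (Topt P γ r Q - Qstar) + (Qstar - Q) := by rw [hD]; abel
    rw [this]
    have h4 : ‖Qstar - Q‖ = ‖Q - Qstar‖ := norm_sub_rev _ _
    calc ‖(Topt P γ r Q - Qstar) + (Qstar - Q)‖
        ≤ ‖Topt P γ r Q - Qstar‖ + ‖Qstar - Q‖ := norm_add_le _ _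
      _ ≤ γ * ‖Q - Qstar‖ + ‖Q - Qstar‖ := by rw [h4]; linarith
      _ = (1 + γ) * ‖Q - Qstar‖ := by ring
  have hmain : ‖Rstar P μ γ lam r Q - Qstar‖
      ≤ γ * ‖Q - Qstar‖ + c / (1 - c) * ((1 + γ) * ‖Q - Qstar‖) := by
    rw [hsplit]
    have := norm_add_le (Topt P γ r Q - Qstar) (∑' t : ℕ, a (t + 1))
    have h5 : c / (1 - c) * ‖D‖ ≤ c / (1 - c) * ((1 + γ) * ‖Q - Qstar‖) :=
      mul_le_mul_of_nonneg_left hDle (div_nonneg hc0 (by linarith))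
    linarith
  have heq : γ * ‖Q - Qstar‖ + c / (1 - c) * ((1 + γ) * ‖Q - Qstar‖)
      = (γ + c) / (1 - c) * ‖Q - Qstar‖ := by
    have h1c : (1 : ℝ) - c ≠ 0 := by linarith
    field_simp
    ring
  linarith [hmain, heq.le]


/-- Lemma 2: for `γ ∈ (0,1)` and `0 ≤ λ < (1−γ)/(2γ)`, the coefficient
`(γ + λγ)/(1 − λγ)` is below 1, the iterates `Q_k = (R*_λ)^k Q` satisfy
`‖Q_k − Q*‖ ≤ [(γ+λγ)/(1−λγ)]^k ‖Q − Q*‖`, and `Q_k → Q*` exponentially fast. -/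
theorem stmt14 {X A : Type*} [Fintype X] [Fintype A] [Nonempty X] [Nonempty A]
    (P : X → A → X → ℝ)
    (hP0 : ∀ x a y, 0 ≤ P x a y) (hP1 : ∀ x a, ∑ y : X, P x a y = 1)
    (μ : X → A → ℝ)
    (hμ0 : ∀ x a, 0 ≤ μ x a) (hμ1 : ∀ x, ∑ a : A, μ x a = 1)
    (γ : ℝ) (hγ0 : 0 < γ) (hγ1 : γ < 1)
    (lam : ℝ) (hl0 : 0 ≤ lam) (hl1 : lam < (1 - γ) / (2 * γ))
    (r : X × A → ℝ) (Qstar : X × A → ℝ)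
    (hQstar : Topt P γ r Qstar = Qstar)
    (Q : X × A → ℝ) :
    (γ + lam * γ) / (1 - lam * γ) < 1 ∧
    (∀ k : ℕ,
      ‖(Rstar P μ γ lam r)^[k] Q - Qstar‖ ≤
        ((γ + lam * γ) / (1 - lam * γ)) ^ k * ‖Q - Qstar‖) ∧
    Tendsto (fun k : ℕ => (Rstar P μ γ lam r)^[k] Q) atTop (𝓝 Qstar) := by
  have hc1' : lam * γ < (1 - γ) / 2 := by
    have h2γ : (0:ℝ) < 2 * γ := by linarith
    have hmul : lam * (2 * γ) < 1 - γ := (lt_div_iff₀ h2γ).mp hl1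
    have he : lam * (2 * γ) = 2 * (lam * γ) := by ring
    linarith
  have hc1 : lam * γ < 1 := by linarith
  have hden : (0:ℝ) < 1 - lam * γ := by linarith
  have hβ0 : 0 ≤ (γ + lam * γ) / (1 - lam * γ) := by
    apply div_nonneg _ hden.le
    have : 0 ≤ lam * γ := mul_nonneg hl0 hγ0.le
    linarith
  have hβ1 : (γ + lam * γ) / (1 - lam * γ) < 1 := by
    rw [div_lt_one hden]
    linarith
  have hbound : ∀ k : ℕ,
      ‖(Rstar P μ γ lam r)^[k] Q - Qstar‖ ≤
        ((γ + lam * γ) / (1 - lam * γ)) ^ k * ‖Q - Qstar‖ := by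
    intro k
    induction k with
    | zero => simp
    | succ n ih =>
        rw [Function.iterate_succ_apply']
        calc ‖Rstar P μ γ lam r ((Rstar P μ γ lam r)^[n] Q) - Qstar‖
            ≤ ((γ + lam * γ) / (1 - lam * γ)) * ‖(Rstar P μ γ lam r)^[n] Q - Qstar‖ :=
              rstar_contract P hP0 hP1 μ hμ0 hμ1 γ hγ0 hγ1 lam hl0 hc1 r Qstar hQstar _
          _ ≤ ((γ + lam * γ) / (1 - lam * γ)) *
                (((γ + lam * γ) / (1 - lam * γ)) ^ n * ‖Q - Qstar‖) :=
              mul_le_mul_of_nonneg_left ih hβ0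
          _ = ((γ + lam * γ) / (1 - lam * γ)) ^ (n + 1) * ‖Q - Qstar‖ := by ring
  refine ⟨hβ1, hbound, ?_⟩
  rw [tendsto_iff_norm_sub_tendsto_zero]
  have hlim : Tendsto (fun k : ℕ =>
      ((γ + lam * γ) / (1 - lam * γ)) ^ k * ‖Q - Qstar‖) atTop (𝓝 0) := by
    have := (tendsto_pow_atTop_nhds_zero_of_lt_one hβ0 hβ1).mul_const ‖Q - Qstar‖
    simpa using this
  exact squeeze_zero (fun k => norm_nonneg _) hbound hlim
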